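/- For each of the spaces X ∈ {cs^λ, cs₀^λ, bs^λ}, a sequence a : ℕ → ℂ belongs to the γ-dual of X (i.e. sup_m |∑_{k=0}^m a_k·x_k| < ∞ for every x ∈ X) if and only if both: (1) ∑_{k=0}^∞ |ã_k − ã_{k+1}| < ∞, and (2) sup_k |λ_k·a_k/(λ_k − λ_{k−1})| < ∞, where ã_k = (a_k/(λ_k − λ_{k−1}) − a_{k+1}/(λ_{k+1} − λ_k))·λ_k. -/

import Mathlib

open Filter Topology

/-- `dl l k = λ_k - λ_{k-1}` with the convention `λ_{-1} = 0`. -/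
noncomputable def dl (l : ℕ → ℝ) (k : ℕ) : ℝ := l k - (if k = 0 then 0 else l (k - 1))

/-- `LamT l x n = Λ_n(x) = (1/λ_n) ∑_{k=0}^n (λ_k - λ_{k-1}) x_k`. -/
noncomputable def LamT (l : ℕ → ℝ) (x : ℕ → ℂ) (n : ℕ) : ℂ :=
  (1 / (l n : ℂ)) * ∑ k ∈ Finset.range (n + 1), ((dl l k : ℝ) : ℂ) * x k

/-- `cs^λ`: the partial sums `∑_{n=0}^m Λ_n(x)` converge. -/
def csLam (l : ℕ → ℝ) : Set (ℕ → ℂ) :=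
  {x | ∃ L, Tendsto (fun m => ∑ n ∈ Finset.range (m + 1), LamT l x n) atTop (𝓝 L)}

/-- `cs₀^λ`: the partial sums `∑_{n=0}^m Λ_n(x)` tend to `0`. -/
def cs0Lam (l : ℕ → ℝ) : Set (ℕ → ℂ) :=
  {x | Tendsto (fun m => ∑ n ∈ Finset.range (m + 1), LamT l x n) atTop (𝓝 0)}

/-- `bs^λ`: the partial sums `∑_{n=0}^m Λ_n(x)` are bounded. -/
def bsLam (l : ℕ → ℝ) : Set (ℕ → ℂ) :=
  {x | ∃ C, ∀ m, ‖∑ n ∈ Finset.range (m + 1), LamT l x n‖ ≤ C}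

/-- `ã_k = (a_k/(λ_k - λ_{k-1}) - a_{k+1}/(λ_{k+1} - λ_k)) λ_k`. -/
noncomputable def atil (l : ℕ → ℝ) (a : ℕ → ℂ) (k : ℕ) : ℂ :=
  (a k / ((dl l k : ℝ) : ℂ) - a (k + 1) / ((dl l (k + 1) : ℝ) : ℂ)) * (l k : ℂ)

/-- `t_{k-1}` with convention `t_{-1}=0`. -/
noncomputable def tp (t : ℕ → ℂ) (k : ℕ) : ℂ := if k = 0 then 0 else t (k - 1)

/-- `u_k = λ_k (t_k - t_{k-1})`. -/
noncomputable def uu (l : ℕ → ℝ) (t : ℕ → ℂ) (k : ℕ) : ℂ := (l k : ℂ) * (t k - tp t k)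

/-- `u_{k-1}` with convention `u_{-1}=0`. -/
noncomputable def up (l : ℕ → ℝ) (t : ℕ → ℂ) (k : ℕ) : ℂ := if k = 0 then 0 else uu l t (k - 1)

/-- the sequence `x` whose `Λ`-partial-sums are `t`. -/
noncomputable def xo (l : ℕ → ℝ) (t : ℕ → ℂ) (k : ℕ) : ℂ :=
  (uu l t k - up l t k) / ((dl l k : ℝ) : ℂ)

section basic
variable {l : ℕ → ℝ} (hmono : StrictMono l) (hpos : 0 < l 0)
include hmono hpos

lemma lpos (k : ℕ) : 0 < l k := lt_of_lt_of_le hpos (hmono.monotone (Nat.zero_le k))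

lemma dlpos (k : ℕ) : 0 < dl l k := by
  cases k with
  | zero => simpa [dl] using hpos
  | succ n => simpa [dl] using hmono (Nat.lt_succ_self n)

lemma lneC (k : ℕ) : ((l k : ℝ) : ℂ) ≠ 0 := by
  exact_mod_cast ne_of_gt (lpos hmono hpos k)

lemma dlneC (k : ℕ) : ((dl l k : ℝ) : ℂ) ≠ 0 := by
  exact_mod_cast ne_of_gt (dlpos hmono hpos k)

lemma sum_dl_xo (t : ℕ → ℂ) (n : ℕ) :
    ∑ k ∈ Finset.range (n + 1), ((dl l k : ℝ) : ℂ) * xo l t k = uu l t n := by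
  induction n with
  | zero =>
    simp [xo, up, mul_div_cancel₀ _ (dlneC hmono hpos 0)]
  | succ n ih =>
    rw [Finset.sum_range_succ, ih, xo, mul_div_cancel₀ _ (dlneC hmono hpos (n+1))]
    simp [up]

lemma S_xo (t : ℕ → ℂ) (m : ℕ) :
    ∑ n ∈ Finset.range (m + 1), LamT l (xo l t) n = t m := by
  have hL : ∀ n, LamT l (xo l t) n = t n - tp t n := by
    intro n
    rw [LamT, sum_dl_xo hmono hpos, uu, one_div, inv_mul_cancel_left₀ (lneC hmono hpos n)]
  induction m with
  | zero => simp [hL, tp]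
  | succ m ih => rw [Finset.sum_range_succ, ih, hL]; simp [tp]

end basic

section key
variable {l : ℕ → ℝ} (hmono : StrictMono l) (hpos : 0 < l 0)
include hmono hpos

/-- Key Abel-summation identity. -/
lemma keyid (a t x : ℕ → ℂ)
    (hx : ∀ k, ((dl l k : ℝ) : ℂ) * x k = uu l t k - up l t k) (m : ℕ) :
    ∑ k ∈ Finset.range (m + 2), a k * x k =
      (∑ k ∈ Finset.range m, (atil l a k - atil l a (k + 1)) * t k) + atil l a m * t m
        + (a (m + 1) / ((dl l (m + 1) : ℝ) : ℂ)) * uu l t (m + 1) := by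
  have hax : ∀ k, a k * x k = a k / ((dl l k : ℝ) : ℂ) * (uu l t k - up l t k) := by
    intro k
    rw [← hx k, div_mul_eq_mul_div, mul_comm ((dl l k : ℝ) : ℂ) (x k), ← mul_assoc,
      mul_div_cancel_right₀ _ (dlneC hmono hpos k)]
  induction m with
  | zero =>
    rw [show (0:ℕ)+2 = 2 from rfl, Finset.sum_range_succ, Finset.sum_range_one, hax 0, hax 1]
    simp only [Finset.range_zero, Finset.sum_empty, zero_add, atil, uu, up, tp]
    simp only [if_pos rfl, Nat.one_ne_zero, if_neg (Nat.one_ne_zero), Nat.sub_self, ↓reduceIte]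
    field_simp
    ring
  | succ m ih =>
    rw [show m+1+2 = (m+2)+1 from rfl, Finset.sum_range_succ, ih, hax (m+2),
      Finset.sum_range_succ]
    have h1 : up l t (m + 2) = uu l t (m + 1) := by simp [up]
    have h2 : tp t (m + 1) = t m := by simp [tp]
    have h3 : tp t (m + 2) = t (m + 1) := by simp [tp]
    rw [h1]
    simp only [atil, uu, h2, h3]
    field_simp
    ring

end key

section suff
variable {l : ℕ → ℝ} (hmono : StrictMono l) (hpos : 0 < l 0)
include hmono hpos

lemma hrel_of_x (x : ℕ → ℂ) :
    ∀ k, ((dl l k : ℝ) : ℂ) * x k =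
      uu l (fun m => ∑ n ∈ Finset.range (m + 1), LamT l x n) k
        - up l (fun m => ∑ n ∈ Finset.range (m + 1), LamT l x n) k := by
  set t : ℕ → ℂ := fun m => ∑ n ∈ Finset.range (m + 1), LamT l x n with ht
  have huP : ∀ k, uu l t k = ∑ j ∈ Finset.range (k + 1), ((dl l j : ℝ) : ℂ) * x j := by
    intro k
    have hlam : ∀ n, (l n : ℂ) * LamT l x n = ∑ j ∈ Finset.range (n + 1), ((dl l j : ℝ) : ℂ) * x j := by
      intro n
      rw [LamT, one_div, ← mul_assoc, mul_inv_cancel₀ (lneC hmono hpos n), one_mul]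
    cases k with
    | zero =>
      have : t 0 - tp t 0 = LamT l x 0 := by simp [ht, tp]
      rw [uu, this, hlam]
    | succ n =>
      have : t (n+1) - tp t (n+1) = LamT l x (n+1) := by
        simp [ht, tp, Finset.sum_range_succ]
      rw [uu, this, hlam]
  intro k
  cases k with
  | zero => rw [up, if_pos rfl, sub_zero, huP]; simp
  | succ n =>
    rw [up, if_neg (Nat.succ_ne_zero n), Nat.succ_sub_one, huP, huP,
      Finset.sum_range_succ]
    ring

lemma suff (a : ℕ → ℂ) (hsum : Summable fun k => ‖atil l a k - atil l a (k + 1)‖)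
    (C : ℝ) (hC : ∀ k, ‖(l k : ℂ) * a k / ((dl l k : ℝ) : ℂ)‖ ≤ C)
    (x : ℕ → ℂ) (hx : x ∈ bsLam l) :
    ∃ C' : ℝ, ∀ m, ‖∑ k ∈ Finset.range (m + 1), a k * x k‖ ≤ C' := by
  obtain ⟨M, hM⟩ := hx
  set t : ℕ → ℂ := fun m => ∑ n ∈ Finset.range (m + 1), LamT l x n with ht
  have hM' : ∀ m, ‖t m‖ ≤ M := hM
  have hM0 : 0 ≤ M := le_trans (norm_nonneg _) (hM' 0)
  set D : ℝ := ∑' k, ‖atil l a k - atil l a (k + 1)‖ with hD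
  have hDpart : ∀ m, ∑ k ∈ Finset.range m, ‖atil l a k - atil l a (k + 1)‖ ≤ D :=
    fun m => Summable.sum_le_tsum _ (fun i _ => norm_nonneg _) hsum
  have hD0 : 0 ≤ D := le_trans (by simp) (hDpart 0)
  have habd : ∀ m, ‖atil l a m‖ ≤ ‖atil l a 0‖ + D := by
    intro m
    have h1 : atil l a m = atil l a 0 - ∑ k ∈ Finset.range m, (atil l a k - atil l a (k+1)) := by
      rw [Finset.sum_range_sub' (atil l a) m]; ring
    rw [h1]
    refine le_trans (norm_sub_le _ _) (add_le_add (le_refl _) ?_)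
    exact le_trans (norm_sum_le _ _) (hDpart m)
  refine ⟨max (‖a 0 * x 0‖) (D * M + (‖atil l a 0‖ + D) * M + C * (M + M)), ?_⟩
  intro m
  cases m with
  | zero => rw [Finset.sum_range_one]; exact le_max_left _ _
  | succ m =>
    refine le_trans ?_ (le_max_right _ _)
    rw [show m + 1 + 1 = m + 2 from rfl, keyid hmono hpos a t x (hrel_of_x hmono hpos x) m]
    refine le_trans (norm_add_le _ _) ?_
    refine add_le_add (le_trans (norm_add_le _ _) (add_le_add ?_ ?_)) ?_
    · refine le_trans (norm_sum_le _ _) ?_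
      calc ∑ k ∈ Finset.range m, ‖(atil l a k - atil l a (k+1)) * t k‖
          ≤ ∑ k ∈ Finset.range m, ‖atil l a k - atil l a (k+1)‖ * M := by
            refine Finset.sum_le_sum fun k _ => ?_
            rw [norm_mul]
            exact mul_le_mul_of_nonneg_left (hM' k) (norm_nonneg _)
        _ = (∑ k ∈ Finset.range m, ‖atil l a k - atil l a (k+1)‖) * M := by
            rw [Finset.sum_mul]
        _ ≤ D * M := mul_le_mul_of_nonneg_right (hDpart m) hM0
    · rw [norm_mul]
      exact mul_le_mul (habd m) (hM' m) (norm_nonneg _)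
        (by positivity)
    · have heq : a (m+1) / ((dl l (m+1) : ℝ) : ℂ) * uu l t (m+1)
          = ((l (m+1) : ℂ) * a (m+1) / ((dl l (m+1) : ℝ) : ℂ)) * (t (m+1) - tp t (m+1)) := by
        rw [uu]; ring
      rw [heq, norm_mul]
      have h2 : ‖t (m+1) - tp t (m+1)‖ ≤ M + M := by
        refine le_trans (norm_sub_le _ _) (add_le_add (hM' (m+1)) ?_)
        rw [tp, if_neg (Nat.succ_ne_zero m), Nat.succ_sub_one]
        exact hM' m
      exact mul_le_mul (hC (m+1)) h2 (norm_nonneg _) (le_trans (norm_nonneg _) (hC 0))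
end suff

section nec
variable {l : ℕ → ℝ} (hmono : StrictMono l) (hpos : 0 < l 0)
include hmono hpos

lemma nec2 (a : ℕ → ℂ)
    (hdual : ∀ t : ℕ → ℂ, Tendsto t atTop (𝓝 0) →
      ∃ C : ℝ, ∀ m, ‖∑ k ∈ Finset.range (m + 1), a k * xo l t k‖ ≤ C) :
    ∃ C : ℝ, ∀ k, ‖(l k : ℂ) * a k / ((dl l k : ℝ) : ℂ)‖ ≤ C := by
  classical
  set g : ℕ → ℂ := fun k => (l k : ℂ) * a k / ((dl l k : ℝ) : ℂ) with hg
  by_contra h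
  push_neg at h
  have step : ∀ (N : ℕ) (C : ℝ), ∃ k, (N ≤ k ∧ 2 ≤ k) ∧ C < ‖g k‖ := by
    intro N C
    obtain ⟨k, hk⟩ := h (|C| + ∑ j ∈ Finset.range (N + 2), ‖g j‖)
    have hsum0 : (0:ℝ) ≤ ∑ j ∈ Finset.range (N + 2), ‖g j‖ :=
      Finset.sum_nonneg fun j _ => norm_nonneg _
    have hNk : N + 2 ≤ k := by
      by_contra hlt
      push_neg at hlt
      have : ‖g k‖ ≤ ∑ j ∈ Finset.range (N + 2), ‖g j‖ :=
        Finset.single_le_sum (fun j _ => norm_nonneg (g j)) (Finset.mem_range.mpr hlt)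
      have := lt_of_lt_of_le hk this
      nlinarith [abs_nonneg C]
    exact ⟨k, ⟨by omega, by omega⟩, lt_of_le_of_lt (by nlinarith [le_abs_self C]) hk⟩
  set f : ℕ → ℕ := fun i => Nat.rec (Classical.choose (step 0 ((((0:ℕ):ℝ)+1)^2)))
      (fun i fi => Classical.choose (step (fi + 3) ((((i+1:ℕ):ℝ)+1)^2))) i with hf
  have hf0 : (0 ≤ f 0 ∧ 2 ≤ f 0) ∧ (((0:ℕ):ℝ)+1)^2 < ‖g (f 0)‖ :=
    Classical.choose_spec (step 0 _)
  have hfs : ∀ i, (f i + 3 ≤ f (i+1) ∧ 2 ≤ f (i+1)) ∧ (((i+1:ℕ):ℝ)+1)^2 < ‖g (f (i+1))‖ :=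
    fun i => Classical.choose_spec (step (f i + 3) _)
  have hbig : ∀ i, (((i:ℕ):ℝ)+1)^2 < ‖g (f i)‖ := by
    intro i; cases i with
    | zero => exact hf0.2
    | succ n => exact (hfs n).2
  have hge2 : ∀ i, 2 ≤ f i := by
    intro i; cases i with
    | zero => exact hf0.1.2
    | succ n => exact (hfs n).1.2
  have hsm : StrictMono f := strictMono_nat_of_lt_succ fun n => by have := (hfs n).1.1; omega
  have hsep : ∀ i j, f j < f i → f j + 3 ≤ f i := by
    intro i j hlt
    have hji : j < i := hsm.lt_iff_lt.mp hlt
    exact le_trans (hfs j).1.1 (hsm.monotone hji)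
  set t : ℕ → ℂ := fun n => if h : ∃ i, f i = n then (((1:ℝ)/((Nat.find h : ℝ)+1) : ℝ) : ℂ) else 0
    with htdef
  have tval : ∀ i, t (f i) = (((1:ℝ)/((i:ℝ)+1) : ℝ) : ℂ) := by
    intro i
    have hex : ∃ i', f i' = f i := ⟨i, rfl⟩
    have : Nat.find hex = i := hsm.injective (Nat.find_spec hex)
    simp only [htdef, dif_pos hex, this]
  have tzero : ∀ n, (∀ i, f i ≠ n) → t n = 0 := by
    intro n hn
    have hne : ¬ ∃ i, f i = n := by rintro ⟨i, hi⟩; exact hn i hi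
    simp only [htdef, dif_neg hne]
  have htend : Tendsto t atTop (𝓝 0) := by
    rw [NormedAddCommGroup.tendsto_nhds_zero]
    intro ε hε
    obtain ⟨I, hI⟩ := exists_nat_one_div_lt hε
    filter_upwards [eventually_ge_atTop (f I + 1)] with n hn
    by_cases hex : ∃ i, f i = n
    · have hfind : f (Nat.find hex) = n := Nat.find_spec hex
      have hgt : I < Nat.find hex := by
        by_contra hle
        push_neg at hle
        have := hsm.monotone hle
        omega
      rw [htdef]
      simp only [dif_pos hex]
      rw [Complex.norm_real, Real.norm_eq_abs, abs_of_nonneg (by positivity)]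
      refine lt_of_le_of_lt ?_ hI
      rw [div_le_div_iff₀ (by positivity) (by positivity)]
      have : (I:ℝ) + 1 ≤ (Nat.find hex : ℝ) + 1 := by
        have : (I:ℝ) ≤ Nat.find hex := by exact_mod_cast hgt.le
        linarith
      linarith
    · push_neg at hex
      rw [tzero n hex]
      simpa using hε
  obtain ⟨C, hCx⟩ := hdual t htend
  have hC0 : 0 ≤ C := le_trans (norm_nonneg _) (hCx 0)
  obtain ⟨i, hi⟩ := exists_nat_gt (2 * C)
  set j := f i with hj
  have hj2 : 2 ≤ j := hge2 i
  -- t vanishes at j-1 and j-2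
  have htj1 : t (j - 1) = 0 := by
    refine tzero _ fun i' hi' => ?_
    have hlt : f i' < f i := by omega
    have := hsep i i' hlt; omega
  have htj2 : t (j - 2) = 0 := by
    refine tzero _ fun i' hi' => ?_
    have hlt : f i' < f i := by omega
    have := hsep i i' hlt; omega
  -- compute a j * xo l t j
  have hupj : up l t j = 0 := by
    have h1 : j - 1 - 1 = j - 2 := by omega
    rw [up, if_neg (by omega : ¬ j = 0), uu, tp, if_neg (by omega : ¬ j - 1 = 0), h1, htj1,
      htj2]
    ring
  have huuj : uu l t j = (l j : ℂ) * (((1:ℝ)/((i:ℝ)+1) : ℝ) : ℂ) := by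
    rw [uu, tp, if_neg (by omega : ¬ j = 0), htj1, sub_zero, hj, tval i]
  have hval : a j * xo l t j = (((1:ℝ)/((i:ℝ)+1) : ℝ) : ℂ) * g j := by
    rw [xo, hupj, sub_zero, huuj, hg]
    field_simp
  have hnorm : ‖a j * xo l t j‖ = (1/((i:ℝ)+1)) * ‖g j‖ := by
    rw [hval, norm_mul, Complex.norm_real, Real.norm_eq_abs, abs_of_nonneg (by positivity)]
  -- difference of partial sums bound
  have hdiff : a j * xo l t j
      = (∑ k ∈ Finset.range (j + 1), a k * xo l t k)
        - ∑ k ∈ Finset.range (j - 1 + 1), a k * xo l t k := by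
    rw [show j - 1 + 1 = j by omega, Finset.sum_range_succ]
    ring
  have hb : ‖a j * xo l t j‖ ≤ C + C := by
    rw [hdiff]
    exact le_trans (norm_sub_le _ _) (add_le_add (hCx j) (hCx (j - 1)))
  have hlb : (i:ℝ) + 1 < ‖a j * xo l t j‖ := by
    rw [hnorm]
    have h1 : ((i:ℝ)+1)^2 < ‖g j‖ := hbig i
    rw [div_mul_eq_mul_div, one_mul, lt_div_iff₀ (by positivity)]
    nlinarith
  have : (2*C : ℝ) < C + C := by
    calc (2*C : ℝ) < (i:ℝ) := hi
    _ < (i:ℝ) + 1 := by linarith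
    _ < ‖a j * xo l t j‖ := hlb
    _ ≤ C + C := hb
  linarith
end nec

section nec1
variable {l : ℕ → ℝ} (hmono : StrictMono l) (hpos : 0 < l 0)
include hmono hpos

lemma nec1 (a : ℕ → ℂ)
    (hdual : ∀ t : ℕ → ℂ, Tendsto t atTop (𝓝 0) →
      ∃ C : ℝ, ∀ m, ‖∑ k ∈ Finset.range (m + 1), a k * xo l t k‖ ≤ C) :
    Summable fun k => ‖atil l a k - atil l a (k + 1)‖ := by
  classical
  set d : ℕ → ℂ := fun k => atil l a k - atil l a (k + 1) with hd
  by_contra hns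
  have hT : Tendsto (fun n => ∑ k ∈ Finset.range n, ‖d k‖) atTop atTop :=
    (not_summable_iff_tendsto_nat_atTop_of_nonneg (fun n => norm_nonneg _)).mp hns
  have step : ∀ (N : ℕ) (c : ℝ), ∃ m, N < m ∧ c < ∑ k ∈ Finset.Ico N m, ‖d k‖ := by
    intro N c
    obtain ⟨m, hm⟩ :=
      (hT.eventually_gt_atTop (|c| + 1 + ∑ k ∈ Finset.range N, ‖d k‖)).exists
    have hNm : N ≤ m := by
      by_contra hlt
      push_neg at hlt
      have hsub : ∑ k ∈ Finset.range m, ‖d k‖ ≤ ∑ k ∈ Finset.range N, ‖d k‖ :=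
        Finset.sum_le_sum_of_subset_of_nonneg
          (Finset.range_subset_range.mpr hlt.le) (fun k _ _ => norm_nonneg _)
      nlinarith [abs_nonneg c]
    have hIco : ∑ k ∈ Finset.Ico N m, ‖d k‖
        = ∑ k ∈ Finset.range m, ‖d k‖ - ∑ k ∈ Finset.range N, ‖d k‖ :=
      Finset.sum_Ico_eq_sub _ hNm
    have hc : c < ∑ k ∈ Finset.Ico N m, ‖d k‖ := by
      rw [hIco]; nlinarith [le_abs_self c]
    refine ⟨m, ?_, hc⟩
    by_contra hle
    push_neg at hle
    have : N = m ∨ m < N := by omega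
    rcases this with h1 | h1
    · subst h1; simp at hc; nlinarith [abs_nonneg c, hc]
    · omega
  set pick : ℕ → ℕ → ℕ := fun i N => Classical.choose (step N ((((i:ℕ):ℝ)+1)^2)) with hpickdef
  have hpick : ∀ i N, N < pick i N ∧
      (((i:ℕ):ℝ)+1)^2 < ∑ k ∈ Finset.Ico N (pick i N), ‖d k‖ :=
    fun i N => Classical.choose_spec (step N ((((i:ℕ):ℝ)+1)^2))
  set NM : ℕ → ℕ × ℕ := fun i => Nat.rec ((0:ℕ), pick 0 0)
      (fun i p => (p.2 + 2, pick (i+1) (p.2 + 2))) i with hNMdef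
  have hNMs : ∀ i, NM (i+1) = ((NM i).2 + 2, pick (i+1) ((NM i).2 + 2)) := fun i => rfl
  have hlt1 : ∀ i, (NM i).1 < (NM i).2 := by
    intro i
    cases i with
    | zero => exact (hpick 0 0).1
    | succ n => rw [hNMs n]; exact (hpick (n+1) ((NM n).2 + 2)).1
  have hblock : ∀ i, (((i:ℕ):ℝ)+1)^2 < ∑ k ∈ Finset.Ico (NM i).1 (NM i).2, ‖d k‖ := by
    intro i
    cases i with
    | zero => exact (hpick 0 0).2
    | succ n => rw [hNMs n]; exact (hpick (n+1) ((NM n).2 + 2)).2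
  have hord : ∀ i j, i < j → (NM i).2 + 2 ≤ (NM j).1 := by
    intro i j hij
    induction j with
    | zero => omega
    | succ n ih =>
      rw [hNMs n]
      rcases Nat.lt_succ_iff_lt_or_eq.mp hij with h | h
      · have := ih h; have := hlt1 n; simp only; omega
      · subst h; simp
  have huniq : ∀ k r r', ((NM r).1 ≤ k ∧ k < (NM r).2) → ((NM r').1 ≤ k ∧ k < (NM r').2)
      → r = r' := by
    intro k r r' h1 h2
    by_contra hne
    rcases Nat.lt_or_ge r r' with h | h
    · have := hord r r' h; omega
    · have hlt : r' < r := by omega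
      have := hord r' r hlt; omega
  set σ : ℕ → ℂ := fun k => if d k = 0 then 0 else (starRingEnd ℂ) (d k) / ((‖d k‖ : ℝ) : ℂ)
    with hσdef
  have hσd : ∀ k, d k * σ k = ((‖d k‖ : ℝ) : ℂ) := by
    intro k
    by_cases h : d k = 0
    · simp [hσdef, h]
    · rw [hσdef]
      simp only [if_neg h]
      have hne : ((‖d k‖ : ℝ) : ℂ) ≠ 0 := by
        simpa using norm_ne_zero_iff.mpr h
      rw [mul_div_assoc', Complex.mul_conj]
      rw [div_eq_iff hne]
      rw [Complex.normSq_eq_norm_sq]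
      push_cast
      ring
  have hσ1 : ∀ k, ‖σ k‖ ≤ 1 := by
    intro k
    by_cases h : d k = 0
    · simp [hσdef, h]
    · rw [hσdef]
      simp only [if_neg h]
      rw [norm_div, RCLike.norm_conj, Complex.norm_real, Real.norm_eq_abs,
        abs_of_nonneg (norm_nonneg _), div_self (norm_ne_zero_iff.mpr h)]
  set t : ℕ → ℂ := fun n => if h : ∃ r, (NM r).1 ≤ n ∧ n < (NM r).2 then
      (((1:ℝ)/((Nat.find h : ℝ)+1) : ℝ) : ℂ) * σ n else 0 with htdef
  have tzero : ∀ n, (∀ r, ¬ ((NM r).1 ≤ n ∧ n < (NM r).2)) → t n = 0 := by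
    intro n hn
    have hne : ¬ ∃ r, (NM r).1 ≤ n ∧ n < (NM r).2 := by rintro ⟨r, hr⟩; exact hn r hr
    simp only [htdef, dif_neg hne]
  have tval : ∀ r n, (NM r).1 ≤ n → n < (NM r).2 →
      t n = (((1:ℝ)/((r : ℝ)+1) : ℝ) : ℂ) * σ n := by
    intro r n h1 h2
    have hex : ∃ r', (NM r').1 ≤ n ∧ n < (NM r').2 := ⟨r, h1, h2⟩
    have : Nat.find hex = r := huniq n _ _ (Nat.find_spec hex) ⟨h1, h2⟩
    simp only [htdef, dif_pos hex, this]
  have htend : Tendsto t atTop (𝓝 0) := by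
    rw [NormedAddCommGroup.tendsto_nhds_zero]
    intro ε hε
    obtain ⟨I, hI⟩ := exists_nat_one_div_lt hε
    filter_upwards [eventually_ge_atTop (NM I).1] with n hn
    by_cases hex : ∃ r, (NM r).1 ≤ n ∧ n < (NM r).2
    · have hspec := Nat.find_spec hex
      have hIfind : I ≤ Nat.find hex := by
        by_contra hlt
        push_neg at hlt
        have := hord (Nat.find hex) I hlt
        omega
      rw [htdef]
      simp only [dif_pos hex]
      rw [norm_mul, Complex.norm_real, Real.norm_eq_abs, abs_of_nonneg (by positivity)]
      refine lt_of_le_of_lt (le_trans (mul_le_of_le_one_right (by positivity) (hσ1 n)) ?_) hI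
      rw [div_le_div_iff₀ (by positivity) (by positivity)]
      have : (I:ℝ) ≤ (Nat.find hex : ℝ) := by exact_mod_cast hIfind
      linarith
    · rw [tzero n (fun r hr => hex ⟨r, hr⟩)]
      simpa using hε
  obtain ⟨C, hCx⟩ := hdual t htend
  obtain ⟨i, hi⟩ := exists_nat_gt C
  set Ni := (NM i).1 with hNi
  set Mi := (NM i).2 with hMi
  -- t vanishes at Mi and Mi + 1
  have htMi : t Mi = 0 := by
    refine tzero _ fun r hr => ?_
    rcases Nat.lt_trichotomy r i with h | h | h
    · have := hord r i h; have := hlt1 i; omega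
    · subst h; omega
    · have := hord i r h; omega
  have htMi1 : t (Mi + 1) = 0 := by
    refine tzero _ fun r hr => ?_
    rcases Nat.lt_trichotomy r i with h | h | h
    · have := hord r i h; have := hlt1 i; omega
    · subst h; omega
    · have := hord i r h; omega
  have hrel : ∀ k, ((dl l k : ℝ) : ℂ) * xo l t k = uu l t k - up l t k := by
    intro k
    rw [xo, mul_comm, div_mul_cancel₀ _ (dlneC hmono hpos k)]
  have hkey := keyid hmono hpos a t (xo l t) hrel Mi
  have huu0 : uu l t (Mi + 1) = 0 := by
    rw [uu, tp, if_neg (Nat.succ_ne_zero Mi), Nat.succ_sub_one, htMi, htMi1]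
    ring
  rw [htMi, huu0, mul_zero, mul_zero, add_zero, add_zero] at hkey
  -- the sum is a sum of nonnegative reals
  set c : ℕ → ℝ := fun k => if h : ∃ r, (NM r).1 ≤ k ∧ k < (NM r).2 then
      ((1:ℝ)/((Nat.find h : ℝ)+1)) * ‖d k‖ else 0 with hcdef
  have hc0 : ∀ k, 0 ≤ c k := by
    intro k
    rw [hcdef]
    by_cases h : ∃ r, (NM r).1 ≤ k ∧ k < (NM r).2
    · simp only [dif_pos h]; positivity
    · simp only [dif_neg h]; exact le_refl 0
  have hdt : ∀ k, d k * t k = ((c k : ℝ) : ℂ) := by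
    intro k
    by_cases h : ∃ r, (NM r).1 ≤ k ∧ k < (NM r).2
    · rw [htdef, hcdef]
      simp only [dif_pos h]
      rw [mul_comm (d k), mul_assoc, mul_comm (σ k) (d k), hσd k]
      push_cast
      ring
    · rw [tzero k (fun r hr => h ⟨r, hr⟩), hcdef]
      simp only [dif_neg h]
      simp
  have hsum_eq : ∑ k ∈ Finset.range Mi, d k * t k = ((∑ k ∈ Finset.range Mi, c k : ℝ) : ℂ) := by
    rw [Finset.sum_congr rfl (fun k _ => hdt k)]
    push_cast
    rfl
  have hcval : ∀ k, Ni ≤ k → k < Mi → c k = ((1:ℝ)/((i : ℝ)+1)) * ‖d k‖ := by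
    intro k h1 h2
    have hex : ∃ r, (NM r).1 ≤ k ∧ k < (NM r).2 := ⟨i, h1, h2⟩
    have : Nat.find hex = i := huniq k _ _ (Nat.find_spec hex) ⟨h1, h2⟩
    rw [hcdef]
    simp only [dif_pos hex, this]
  have hlow : (i:ℝ) + 1 < ∑ k ∈ Finset.range Mi, c k := by
    have hsub : Finset.Ico Ni Mi ⊆ Finset.range Mi := by
      intro k hk
      rw [Finset.mem_range]
      exact (Finset.mem_Ico.mp hk).2
    have h1 : ∑ k ∈ Finset.Ico Ni Mi, c k ≤ ∑ k ∈ Finset.range Mi, c k :=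
      Finset.sum_le_sum_of_subset_of_nonneg hsub (fun k _ _ => hc0 k)
    have h2 : ∑ k ∈ Finset.Ico Ni Mi, c k
        = ((1:ℝ)/((i : ℝ)+1)) * ∑ k ∈ Finset.Ico Ni Mi, ‖d k‖ := by
      rw [Finset.mul_sum]
      refine Finset.sum_congr rfl fun k hk => ?_
      obtain ⟨hk1, hk2⟩ := Finset.mem_Ico.mp hk
      exact hcval k hk1 hk2
    have h3 := hblock i
    have hpos' : (0:ℝ) < (i:ℝ) + 1 := by positivity
    have h4 : (i:ℝ) + 1 < ((1:ℝ)/((i : ℝ)+1)) * ∑ k ∈ Finset.Ico Ni Mi, ‖d k‖ := by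
      rw [div_mul_eq_mul_div, one_mul, lt_div_iff₀ hpos']
      nlinarith
    linarith [h1, h2 ▸ h4]
  have hub := hCx (Mi + 1)
  rw [show Mi + 1 + 1 = Mi + 2 from rfl, hkey] at hub
  have : ∑ k ∈ Finset.range Mi, (atil l a k - atil l a (k+1)) * t k
      = ∑ k ∈ Finset.range Mi, d k * t k := rfl
  rw [this, hsum_eq, Complex.norm_real, Real.norm_eq_abs] at hub
  have habs : (i:ℝ) + 1 ≤ |∑ k ∈ Finset.range Mi, c k| := by
    rw [abs_of_nonneg (Finset.sum_nonneg fun k _ => hc0 k)]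
    exact hlow.le
  have : (i:ℝ) < C := by linarith
  linarith
end nec1

theorem stmt17 (l : ℕ → ℝ) (hmono : StrictMono l) (hpos : 0 < l 0)
    (hlim : Tendsto l atTop atTop) (a : ℕ → ℂ) :
    ((∀ x ∈ csLam l, ∃ C : ℝ, ∀ m, ‖∑ k ∈ Finset.range (m + 1), a k * x k‖ ≤ C) ↔
      ((Summable fun k => ‖atil l a k - atil l a (k + 1)‖) ∧
        ∃ C : ℝ, ∀ k, ‖(l k : ℂ) * a k / ((dl l k : ℝ) : ℂ)‖ ≤ C)) ∧
    ((∀ x ∈ cs0Lam l, ∃ C : ℝ, ∀ m, ‖∑ k ∈ Finset.range (m + 1), a k * x k‖ ≤ C) ↔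
      ((Summable fun k => ‖atil l a k - atil l a (k + 1)‖) ∧
        ∃ C : ℝ, ∀ k, ‖(l k : ℂ) * a k / ((dl l k : ℝ) : ℂ)‖ ≤ C)) ∧
    ((∀ x ∈ bsLam l, ∃ C : ℝ, ∀ m, ‖∑ k ∈ Finset.range (m + 1), a k * x k‖ ≤ C) ↔
      ((Summable fun k => ‖atil l a k - atil l a (k + 1)‖) ∧
        ∃ C : ℝ, ∀ k, ‖(l k : ℂ) * a k / ((dl l k : ℝ) : ℂ)‖ ≤ C)) := by
  have hsub1 : cs0Lam l ⊆ csLam l := fun x hx => ⟨0, hx⟩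
  have hsub2 : csLam l ⊆ bsLam l := by
    rintro x ⟨L, hL⟩
    obtain ⟨C, hC⟩ := hL.norm.bddAbove_range
    exact ⟨C, fun m => hC ⟨m, rfl⟩⟩
  have hnec : (∀ x ∈ cs0Lam l, ∃ C : ℝ, ∀ m, ‖∑ k ∈ Finset.range (m + 1), a k * x k‖ ≤ C) →
      ((Summable fun k => ‖atil l a k - atil l a (k + 1)‖) ∧
        ∃ C : ℝ, ∀ k, ‖(l k : ℂ) * a k / ((dl l k : ℝ) : ℂ)‖ ≤ C) := by
    intro hdual
    have hd' : ∀ t : ℕ → ℂ, Tendsto t atTop (𝓝 0) →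
        ∃ C : ℝ, ∀ m, ‖∑ k ∈ Finset.range (m + 1), a k * xo l t k‖ ≤ C := by
      intro t ht
      refine hdual (xo l t) ?_
      have heq : (fun m => ∑ n ∈ Finset.range (m + 1), LamT l (xo l t) n) = t :=
        funext (S_xo hmono hpos t)
      rw [cs0Lam, Set.mem_setOf_eq, heq]
      exact ht
    exact ⟨nec1 hmono hpos a hd', nec2 hmono hpos a hd'⟩
  have hsuf : ((Summable fun k => ‖atil l a k - atil l a (k + 1)‖) ∧
        ∃ C : ℝ, ∀ k, ‖(l k : ℂ) * a k / ((dl l k : ℝ) : ℂ)‖ ≤ C) →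
      ∀ x ∈ bsLam l, ∃ C : ℝ, ∀ m, ‖∑ k ∈ Finset.range (m + 1), a k * x k‖ ≤ C := by
    rintro ⟨h1, C, hC⟩ x hx
    exact suff hmono hpos a h1 C hC x hx
  exact ⟨⟨fun h => hnec (fun x hx => h x (hsub1 hx)), fun h x hx => hsuf h x (hsub2 hx)⟩,
    ⟨fun h => hnec h, fun h x hx => hsuf h x (hsub2 (hsub1 hx))⟩,
    ⟨fun h => hnec (fun x hx => h x (hsub2 (hsub1 hx))), fun h => hsuf h⟩⟩
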